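/- Let γ ∈ (0,1), b* = 1/(1-γ), and define p_t by p₁ = γ^γ and p_t = [ p_{t-1} · γb* / (γb* + 1 - p_{t-1}) ]^γ. Then p_t → 1 as t → ∞. -/

import Mathlib

open Real Filter

/-- Key inequality: the recurrence map strictly increases values in (0,1). -/
lemma pgss_key {γ x : ℝ} (hγ0 : 0 < γ) (hγ1 : γ < 1) (hx0 : 0 < x) (hx1 : x < 1) :
    x < (x * (γ * (1 / (1 - γ))) / (γ * (1 / (1 - γ)) + 1 - x)) ^ γ := by
  have h1γ : 0 < 1 - γ := by linarith
  set c : ℝ := γ * (1 / (1 - γ)) with hc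
  have hcpos : 0 < c := by positivity
  have hd : 0 < c + 1 - x := by nlinarith
  set r : ℝ := 1 / γ - 1 with hr
  have hrpos : 0 < r := by
    have : 1 < 1 / γ := (one_lt_div hγ0).mpr hγ1
    rw [hr]; linarith
  set q : ℝ := 1 - x with hq
  have hqpos : 0 < q := by rw [hq]; linarith
  -- step 1 : x ^ (-r) > 1 + r * q
  have hlog : Real.log x < -q := by
    have := Real.log_lt_sub_one_of_pos hx0 (ne_of_lt hx1)
    rw [hq]; linarith
  have hstep1 : 1 + r * q < x ^ (-r) := by
    rw [Real.rpow_def_of_pos hx0]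
    calc 1 + r * q < Real.exp (r * q) := by
          have := Real.add_one_lt_exp (mul_pos hrpos hqpos).ne'
          linarith
      _ ≤ Real.exp (-r * Real.log x) := by
          apply Real.exp_le_exp.mpr
          nlinarith
      _ = Real.exp (Real.log x * -r) := by ring_nf
  -- rewrite 1 + r*q = (c + 1 - x)/c
  have hrq : 1 + r * q = (c + 1 - x) / c := by
    field_simp [hc, hr, hq]
    have key : r * c = 1 := by
      rw [hr, hc]; field_simp
    linear_combination q * key + hq
  -- step 2: x ^ r < c / (c + 1 - x)
  have hxr : 0 < x ^ r := Real.rpow_pos_of_pos hx0 r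
  have hstep2 : x ^ r < c / (c + 1 - x) := by
    have hneg : x ^ (-r) = (x ^ r)⁻¹ := Real.rpow_neg hx0.le r
    rw [hneg, hrq] at hstep1
    have h' : c + 1 - x < (x ^ r)⁻¹ * c := by
      rwa [div_lt_iff₀ hcpos] at hstep1
    rw [lt_div_iff₀ hd]
    calc x ^ r * (c + 1 - x) < x ^ r * ((x ^ r)⁻¹ * c) :=
          mul_lt_mul_of_pos_left h' hxr
      _ = c := by field_simp
  -- step 3 : x ^ (1/γ) < x * c / (c + 1 - x)
  have hstep3 : x ^ (1 / γ) < x * c / (c + 1 - x) := by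
    have h1r : (1 : ℝ) + r = 1 / γ := by rw [hr]; ring
    have : x ^ (1 / γ) = x * x ^ r := by
      rw [← h1r, Real.rpow_one_add' hx0.le (by linarith : (0:ℝ) < 1 + r).ne']
    rw [this, mul_div_assoc]
    exact mul_lt_mul_of_pos_left hstep2 hx0
  -- conclude by raising to power γ
  have := Real.rpow_lt_rpow (Real.rpow_pos_of_pos hx0 _).le hstep3 hγ0
  rwa [← Real.rpow_mul hx0.le, one_div_mul_cancel hγ0.ne', Real.rpow_one] at this

/-- Invariance: the map sends (0,1) to (0,1). -/
lemma pgss_inv {γ x : ℝ} (hγ0 : 0 < γ) (hγ1 : γ < 1) (hx0 : 0 < x) (hx1 : x < 1) :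
    0 < (x * (γ * (1 / (1 - γ))) / (γ * (1 / (1 - γ)) + 1 - x)) ^ γ ∧
    (x * (γ * (1 / (1 - γ))) / (γ * (1 / (1 - γ)) + 1 - x)) ^ γ < 1 := by
  have h1γ : 0 < 1 - γ := by linarith
  set c : ℝ := γ * (1 / (1 - γ)) with hc
  have hcpos : 0 < c := by positivity
  have hd : 0 < c + 1 - x := by nlinarith
  have hin0 : 0 < x * c / (c + 1 - x) := by positivity
  have hin1 : x * c / (c + 1 - x) < 1 := by
    rw [div_lt_one hd]
    nlinarith
  exact ⟨Real.rpow_pos_of_pos hin0 γ,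
    Real.rpow_lt_one hin0.le hin1 hγ0⟩

theorem pgss_p_tendsto_one_fixed (γ : ℝ) (hγ0 : 0 < γ) (hγ1 : γ < 1)
    (p : ℕ → ℝ)
    (h1 : p 1 = γ ^ γ)
    (hrec : ∀ t : ℕ, 1 ≤ t →
      p (t + 1) = (p t * (γ * (1 / (1 - γ))) / (γ * (1 / (1 - γ)) + 1 - p t)) ^ γ) :
    Filter.Tendsto p Filter.atTop (nhds 1) := by
  have h1γ : 0 < 1 - γ := by linarith
  set c : ℝ := γ * (1 / (1 - γ)) with hc
  have hcpos : 0 < c := by positivity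
  -- membership in (0,1) for all t ≥ 1
  have hmem : ∀ t, 1 ≤ t → 0 < p t ∧ p t < 1 := by
    intro t ht
    induction t with
    | zero => omega
    | succ n ih =>
      rcases Nat.lt_or_ge n 1 with h | hn
      · have hn0 : n = 0 := by omega
        subst hn0
        rw [h1]
        exact ⟨Real.rpow_pos_of_pos hγ0 γ, Real.rpow_lt_one hγ0.le hγ1 hγ0⟩
      · obtain ⟨h0, hlt⟩ := ih hn
        rw [hrec n hn]
        exact pgss_inv hγ0 hγ1 h0 hlt
  -- monotonicity
  have hmono : ∀ t, 1 ≤ t → p t < p (t + 1) := by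
    intro t ht
    obtain ⟨h0, hlt⟩ := hmem t ht
    rw [hrec t ht]
    exact pgss_key hγ0 hγ1 h0 hlt
  -- shifted sequence
  set Q : ℕ → ℝ := fun n => p (n + 1) with hQ
  have hQmono : Monotone Q := by
    apply monotone_nat_of_le_succ
    intro n
    exact (hmono (n + 1) (by omega)).le
  have hQbdd : BddAbove (Set.range Q) := by
    refine ⟨1, ?_⟩
    rintro x ⟨n, rfl⟩
    exact (hmem (n + 1) (by omega)).2.le
  set L : ℝ := ⨆ n, Q n with hL
  have hQtend : Tendsto Q atTop (nhds L) := tendsto_atTop_ciSup hQmono hQbdd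
  have hL1 : L ≤ 1 := ciSup_le fun n => (hmem (n + 1) (by omega)).2.le
  have hL0 : 0 < L := lt_of_lt_of_le (hmem 1 le_rfl).1 (le_ciSup hQbdd 0)
  -- L is a fixed point
  have hdL : 0 < c + 1 - L := by linarith
  have hfix : (L * c / (c + 1 - L)) ^ γ = L := by
    have hshift : Tendsto (fun n => Q (n + 1)) atTop (nhds L) :=
      hQtend.comp (tendsto_add_atTop_nat 1)
    have hcont : ContinuousAt (fun x : ℝ => (x * c / (c + 1 - x)) ^ γ) L := by
      apply ContinuousAt.rpow_const
      · exact ContinuousAt.div (by fun_prop) (by fun_prop) hdL.ne'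
      · exact Or.inr hγ0.le
    have hcomp : Tendsto (fun n => (Q n * c / (c + 1 - Q n)) ^ γ) atTop
        (nhds ((L * c / (c + 1 - L)) ^ γ)) := hcont.tendsto.comp hQtend
    have heq : (fun n => Q (n + 1)) = fun n => (Q n * c / (c + 1 - Q n)) ^ γ := by
      funext n
      exact hrec (n + 1) (by omega)
    rw [heq] at hshift
    exact tendsto_nhds_unique hcomp hshift
  -- L must be 1
  have hLeq : L = 1 := by
    by_contra h
    have hLlt : L < 1 := lt_of_le_of_ne hL1 h
    have := pgss_key hγ0 hγ1 hL0 hLlt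
    rw [← hc] at this
    rw [hfix] at this
    exact lt_irrefl L this
  rw [hLeq] at hQtend
  exact (tendsto_add_atTop_iff_nat 1).mp hQtend
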